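/- Let 0 < α < 2, let a < b be real numbers, let x ∈ [(a+b)/2, b), and set δ = b − x = min{x−a, b−x}. Let p : ℝ → ℝ be bounded and Borel measurable with p(z) = 1 for z ≤ a, p(z) = 0 for z ≥ b, and suppose p is twice continuously differentiable in a neighborhood of x. Then the function y ↦ [p(x+y) − p(x) − 1_{{|y|<δ}}·y·p′(x)]/|y|^{1+α} is Lebesgue integrable on ℝ\{0}, and ∫_{ℝ\{0}} [p(x+y) − p(x) − 1_{{|y|<δ}} y p′(x)]/|y|^{1+α} dy = −(1/α)[(x−a)^{−α} + (b−x)^{−α}]·p(x) + ∫_{a−x}^{x−b} (p(x+y) − p(x))/|y|^{1+α} dy + ∫_{x−b}^{b−x} (p(x+y) − p(x) − y p′(x))/|y|^{1+α} dy + 1/(α(x−a)^α). -/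

import Mathlib

open MeasureTheory Set intervalIntegral

lemma escape_taylor_bound_aux {p : ℝ → ℝ} {x : ℝ} (hsmooth : ContDiffAt ℝ 2 p x) :
    ∃ ε > 0, ∃ C ≥ 0, ∀ y : ℝ, |y| ≤ ε →
      |p (x + y) - p x - y * deriv p x| ≤ C * y ^ 2 := by
  obtain ⟨u, hu, hpu⟩ := hsmooth.contDiffOn le_rfl (by simp)
  set v := interior u with hv
  have hv_open : IsOpen v := isOpen_interior
  have hxv : x ∈ v := mem_interior_iff_mem_nhds.mpr hu
  have hpv : ContDiffOn ℝ 2 p v := hpu.mono interior_subset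
  have hd1 : ∀ z ∈ v, HasDerivAt p (deriv p z) z := fun z hz =>
    (((hpv.differentiableOn (by norm_num)) z hz).differentiableAt
      (hv_open.mem_nhds hz)).hasDerivAt
  have hd2' : ContDiffOn ℝ 1 (deriv p) v := hpv.deriv_of_isOpen hv_open (by norm_num)
  have hd2 : ∀ z ∈ v, HasDerivAt (deriv p) (deriv (deriv p) z) z := fun z hz =>
    (((hd2'.differentiableOn (by norm_num)) z hz).differentiableAt
      (hv_open.mem_nhds hz)).hasDerivAt
  have hcont : ContinuousOn (deriv (deriv p)) v :=
    hd2'.continuousOn_deriv_of_isOpen hv_open le_rfl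
  obtain ⟨ε, hε, hball⟩ : ∃ ε > 0, Metric.closedBall x ε ⊆ v :=
    (Metric.nhds_basis_closedBall.mem_iff).mp (hv_open.mem_nhds hxv)
  obtain ⟨C, hC⟩ := (isCompact_closedBall x ε).exists_bound_of_continuousOn (hcont.mono hball)
  have hC0 : 0 ≤ C := le_trans (norm_nonneg _) (hC x (Metric.mem_closedBall_self hε.le))
  have key : ∀ z ∈ Metric.closedBall x ε, ‖deriv p z - deriv p x‖ ≤ C * ‖z - x‖ :=
    fun z hz => (convex_closedBall x ε).norm_image_sub_le_of_norm_hasDerivWithin_le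
      (fun w hw => (hd2 w (hball hw)).hasDerivWithinAt) (fun w hw => hC w hw)
      (Metric.mem_closedBall_self hε.le) hz
  refine ⟨ε, hε, C, hC0, fun y hy => ?_⟩
  set s : Set ℝ := Metric.closedBall x |y| with hs
  have hsub : s ⊆ Metric.closedBall x ε := Metric.closedBall_subset_closedBall hy
  set g : ℝ → ℝ := fun z => p z - (z - x) * deriv p x with hg
  have hgd : ∀ z ∈ s, HasDerivWithinAt g (deriv p z - deriv p x) s z := by
    intro z hz
    have h1 : HasDerivAt (fun w : ℝ => (w - x) * deriv p x) (1 * deriv p x) z :=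
      ((hasDerivAt_id z).sub_const x).mul_const _
    have := (hd1 z (hball (hsub hz))).sub h1
    rw [one_mul] at this
    exact this.hasDerivWithinAt
  have hgb : ∀ z ∈ s, ‖deriv p z - deriv p x‖ ≤ C * |y| := by
    intro z hz
    refine (key z (hsub hz)).trans ?_
    have : ‖z - x‖ ≤ |y| := by
      simpa [Real.dist_eq] using Metric.mem_closedBall.mp hz
    exact mul_le_mul_of_nonneg_left this hC0
  have hmem : x + y ∈ s := by
    simp [hs, Real.dist_eq, Metric.mem_closedBall, abs_nonneg]
  have hx0 : x ∈ s := Metric.mem_closedBall_self (abs_nonneg y)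
  have := (convex_closedBall x |y|).norm_image_sub_le_of_norm_hasDerivWithin_le
    hgd hgb hx0 hmem
  have hge : g (x + y) - g x = p (x + y) - p x - y * deriv p x := by
    simp [hg]; ring
  rw [hge] at this
  calc |p (x + y) - p x - y * deriv p x| ≤ C * |y| * ‖x + y - x‖ := this
    _ = C * y ^ 2 := by
        rw [show x + y - x = y by ring, Real.norm_eq_abs]
        rw [mul_assoc, abs_mul_abs_self, sq]

/-- Rewriting the symmetric part of the nonlocal generator for the escape
probability on `D = (a,b)`, in the case `(a+b)/2 ≤ x < b` (so the truncation
radius is `δ = b - x`): with exterior values `p = 1` on `(-∞,a]` and `p = 0`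
on `[b,∞)`, the integrand `[p(x+y) - p(x) - 1_{|y|<δ} y p'(x)]/|y|^{1+α}` is
integrable on `ℝ \ {0}` and its integral equals
`-(1/α)[(x-a)^{-α} + (b-x)^{-α}] p(x) + ∫_{a-x}^{x-b} (p(x+y)-p(x))/|y|^{1+α} dy
 + ∫_{x-b}^{b-x} (p(x+y)-p(x)-y p'(x))/|y|^{1+α} dy + 1/(α(x-a)^α)`. -/
theorem escape_probability_symmetric_part_right (α a b x : ℝ)
    (hα0 : 0 < α) (hα2 : α < 2) (hab : a < b)
    (hx : x ∈ Ico ((a + b) / 2) b) (p : ℝ → ℝ) (hmeas : Measurable p)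
    (hbdd : ∃ M : ℝ, ∀ z : ℝ, |p z| ≤ M)
    (hpa : ∀ z : ℝ, z ≤ a → p z = 1) (hpb : ∀ z : ℝ, b ≤ z → p z = 0)
    (hsmooth : ContDiffAt ℝ 2 p x) :
    IntegrableOn (fun y : ℝ =>
        (p (x + y) - p x - (if |y| < b - x then y * deriv p x else 0)) / |y| ^ (1 + α))
      {(0 : ℝ)}ᶜ ∧
    (∫ y in {(0 : ℝ)}ᶜ,
        (p (x + y) - p x - (if |y| < b - x then y * deriv p x else 0)) / |y| ^ (1 + α)) =
      -(1 / α) * ((x - a) ^ (-α) + (b - x) ^ (-α)) * p x +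
        (∫ y in (a - x)..(x - b), (p (x + y) - p x) / |y| ^ (1 + α)) +
        (∫ y in (x - b)..(b - x), (p (x + y) - p x - y * deriv p x) / |y| ^ (1 + α)) +
        1 / (α * (x - a) ^ α) := by
  obtain ⟨M, hM⟩ := hbdd
  have hM0 : 0 ≤ M := (abs_nonneg _).trans (hM 0)
  have hδ : 0 < b - x := sub_pos.mpr hx.2
  have hr : 0 < x - a := by have := hx.1; simp only [mem_Ico] at hx; linarith [hx.1]
  have hδr : b - x ≤ x - a := by simp only [mem_Ico] at hx; linarith [hx.1]
  set f : ℝ → ℝ := fun y : ℝ =>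
    (p (x + y) - p x - (if |y| < b - x then y * deriv p x else 0)) / |y| ^ (1 + α) with hfdef
  -- measurability
  have hfm : Measurable f := by
    apply Measurable.div
    · exact ((hmeas.comp (measurable_const.add measurable_id)).sub measurable_const).sub
        (Measurable.ite (measurableSet_lt measurable_abs measurable_const)
          (measurable_id.mul_const _) measurable_const)
    · have hcont : Continuous fun y : ℝ => |y| ^ (1 + α) := by
        rw [continuous_iff_continuousAt]
        intro y
        exact (Real.continuousAt_rpow_const _ _ (Or.inr (by linarith))).comp
          continuous_abs.continuousAt
      exact hcont.measurable
  -- Taylor bound near 0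
  obtain ⟨ε, hε, C, hC0, htaylor⟩ := escape_taylor_bound_aux hsmooth
  set ε₀ : ℝ := min ε (b - x) with hε₀def
  have hε₀ : 0 < ε₀ := lt_min hε hδ
  have hε₀ε : ε₀ ≤ ε := min_le_left _ _
  have hε₀δ : ε₀ ≤ b - x := min_le_right _ _
  have h1α : (0:ℝ) ≤ 1 + α := by linarith
  have hlt : -(1 + α) < -1 := by linarith
  -- integrability of |y|^(1-α) near 0
  have hnegEmb : MeasurableEmbedding (fun x : ℝ => -x) :=
    (Homeomorph.neg ℝ).isClosedEmbedding.measurableEmbedding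
  have hpow_pos : IntegrableOn (fun y : ℝ => |y| ^ (1 - α)) (Ioo 0 ε₀) := by
    refine ((integrableOn_Ioo_rpow_iff (s := 1 - α) hε₀).mpr (by linarith)).congr_fun
      (fun y hy => ?_) measurableSet_Ioo
    rw [abs_of_pos hy.1]
  have hpow_neg : IntegrableOn (fun y : ℝ => |y| ^ (1 - α)) (Ioo (-ε₀) 0) := by
    have h := (hnegEmb.integrableOn_map_iff
      (f := fun y : ℝ => |y| ^ (1 - α)) (μ := volume) (s := Ioo 0 ε₀))
    rw [Measure.map_neg_eq_self] at h
    have h2 := h.mp hpow_pos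
    have hpre : (fun x : ℝ => -x) ⁻¹' Ioo 0 ε₀ = Ioo (-ε₀) 0 := by
      ext z; simp only [mem_preimage, mem_Ioo]; constructor <;> intro hz <;>
        constructor <;> linarith [hz.1, hz.2]
    rw [hpre] at h2
    refine h2.congr_fun (fun y _ => ?_) measurableSet_Ioo
    simp [Function.comp, abs_neg]
  have hpow : IntegrableOn (fun y : ℝ => |y| ^ (1 - α)) (Ioo (-ε₀) ε₀) := by
    refine (hpow_neg.union hpow_pos).mono_set_ae (ae_le_set.mpr ?_)
    refine measure_mono_null (fun z hz => ?_) (measure_singleton (0:ℝ))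
    simp only [mem_diff, mem_Ioo, mem_union, not_or, mem_singleton_iff] at hz ⊢
    rcases hz with ⟨⟨h1, h2⟩, h3⟩
    by_contra hz0
    rcases lt_or_gt_of_ne hz0 with h | h
    · exact h3.1 ⟨h1, h⟩
    · exact h3.2 ⟨h, h2⟩
  -- integrability of f near 0
  have hfC_mid : IntegrableOn f (Ioo (-ε₀) ε₀) := by
    refine Integrable.mono' (hpow.const_mul C) hfm.aestronglyMeasurable.restrict ?_
    filter_upwards [ae_restrict_mem measurableSet_Ioo] with y hy
    rw [Real.norm_eq_abs]
    by_cases hy0 : y = 0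
    · subst hy0
      have : f 0 = 0 := by simp [hfdef]
      rw [this, abs_zero]
      positivity
    · have hyabs : |y| < ε₀ := abs_lt.mpr ⟨hy.1, hy.2⟩
      have hif : |y| < b - x := lt_of_lt_of_le hyabs hε₀δ
      have hden : (0:ℝ) < |y| ^ (1 + α) := Real.rpow_pos_of_pos (abs_pos.mpr hy0) _
      have hfy : f y = (p (x + y) - p x - y * deriv p x) / |y| ^ (1 + α) := by
        simp [hfdef, if_pos hif]
      rw [hfy, abs_div, abs_of_pos hden, div_le_iff₀ hden]
      have hmul : C * |y| ^ (1 - α) * |y| ^ (1 + α) = C * y ^ 2 := by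
        rw [mul_assoc, ← Real.rpow_add (abs_pos.mpr hy0)]
        rw [show (1:ℝ) - α + (1 + α) = 2 by ring]
        rw [show (2:ℝ) = ((2:ℕ):ℝ) by norm_num, Real.rpow_natCast, sq_abs]
      rw [hmul]
      exact htaylor y (le_trans hyabs.le hε₀ε)
  -- boundedness away from 0
  have hbound : ∀ s : Set ℝ, MeasurableSet s → (∀ y ∈ s, ε₀ ≤ |y|) → volume s ≠ ⊤ →
      IntegrableOn f s := by
    intro s hsm hs hfin
    refine Measure.integrableOn_of_bounded
      (M := (M + M + (b - x) * |deriv p x|) / ε₀ ^ (1 + α)) hfin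
      hfm.aestronglyMeasurable ?_
    filter_upwards [ae_restrict_mem hsm] with y hy
    rw [Real.norm_eq_abs]
    have hyabs : ε₀ ≤ |y| := hs y hy
    have hy0 : y ≠ 0 := by
      intro h; rw [h, abs_zero] at hyabs; linarith
    have hden : (0:ℝ) < |y| ^ (1 + α) := Real.rpow_pos_of_pos (abs_pos.mpr hy0) _
    have hdenle : ε₀ ^ (1 + α) ≤ |y| ^ (1 + α) := Real.rpow_le_rpow hε₀.le hyabs h1α
    have hnum : |p (x + y) - p x - (if |y| < b - x then y * deriv p x else 0)| ≤
        M + M + (b - x) * |deriv p x| := by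
      have h1 : |p (x + y) - p x| ≤ M + M := (abs_sub _ _).trans
        (add_le_add (hM _) (hM _))
      have h2 : |(if |y| < b - x then y * deriv p x else 0)| ≤ (b - x) * |deriv p x| := by
        split_ifs with h
        · rw [abs_mul]
          exact mul_le_mul_of_nonneg_right h.le (abs_nonneg _)
        · rw [abs_zero]; positivity
      calc |p (x + y) - p x - (if |y| < b - x then y * deriv p x else 0)|
          ≤ |p (x + y) - p x| + |(if |y| < b - x then y * deriv p x else 0)| :=
            abs_sub _ _
        _ ≤ M + M + (b - x) * |deriv p x| := add_le_add h1 h2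
    have hnum0 : (0:ℝ) ≤ M + M + (b - x) * |deriv p x| := by positivity
    rw [hfdef]
    simp only []
    rw [abs_div, abs_of_pos hden]
    exact div_le_div₀ hnum0 hnum (Real.rpow_pos_of_pos hε₀ _) hdenle
  -- piece A : (-∞, -(x-a))
  have hIciIoi : ∀ {g : ℝ → ℝ} {c : ℝ}, IntegrableOn g (Ioi c) → IntegrableOn g (Ici c) := by
    intro g c h
    refine h.mono_set_ae (ae_le_set.mpr (measure_mono_null (fun z hz => ?_)
      (measure_singleton c)))
    simp only [mem_diff, mem_Ici, mem_Ioi, not_lt, mem_singleton_iff] at hz ⊢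
    linarith [hz.1, hz.2]
  have hgA : IntegrableOn (fun t : ℝ => (1 - p x) * t ^ (-(1 + α))) (Ici (x - a)) :=
    hIciIoi ((integrableOn_Ioi_rpow_of_lt hlt hr).const_mul (1 - p x))
  have hA' : IntegrableOn f (Iic (-(x - a))) := by
    have h := (hnegEmb.integrableOn_map_iff
      (f := fun t : ℝ => (1 - p x) * t ^ (-(1 + α))) (μ := volume) (s := Ici (x - a)))
    rw [Measure.map_neg_eq_self] at h
    have h2 := h.mp hgA
    have hpre : (fun x : ℝ => -x) ⁻¹' Ici (x - a) = Iic (-(x - a)) := by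
      ext z; simp only [mem_preimage, mem_Ici, mem_Iic]; constructor <;> intro hz <;> linarith
    rw [hpre] at h2
    refine h2.congr_fun (fun y hy => ?_) measurableSet_Iic
    have hy' : y ≤ -(x - a) := hy
    have hy0 : y < 0 := lt_of_le_of_lt hy' (by linarith)
    have hpxy : p (x + y) = 1 := hpa _ (by linarith)
    have habs : |y| = -y := abs_of_neg hy0
    have hif : ¬ |y| < b - x := by rw [habs]; push_neg; linarith
    simp only [Function.comp, hfdef, hpxy, if_neg hif, sub_zero]
    rw [habs, Real.rpow_neg (by linarith : (0:ℝ) ≤ -y), div_eq_mul_inv, mul_comm,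
      inv_eq_one_div, div_eq_mul_inv, one_mul]
    try ring
  have hA : IntegrableOn f (Iio (-(x - a))) := hA'.mono_set Iio_subset_Iic_self
  -- piece B : [-(x-a), -(b-x))
  have hB : IntegrableOn f (Ico (-(x - a)) (-(b - x))) := by
    refine hbound _ measurableSet_Ico (fun y hy => ?_) measure_Ico_lt_top.ne
    rcases hy with ⟨h1, h2⟩
    have hy0 : y < 0 := lt_of_lt_of_le h2 (by linarith)
    rw [abs_of_neg hy0]
    linarith
  -- piece C : [-(b-x), b-x)
  have hCmid : IntegrableOn f (Ico (-ε₀) ε₀) := by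
    refine hfC_mid.mono_set_ae (ae_le_set.mpr (measure_mono_null (fun z hz => ?_)
      (measure_singleton (-ε₀))))
    simp only [mem_diff, mem_Ico, mem_Ioo, not_and, not_lt, mem_singleton_iff] at hz ⊢
    rcases hz with ⟨⟨h1, h2⟩, h3⟩
    rcases eq_or_lt_of_le h1 with h | h
    · exact h.symm
    · exact absurd h2 (not_lt.mpr (h3 h))
  have hCl : IntegrableOn f (Ico (-(b - x)) (-ε₀)) := by
    refine hbound _ measurableSet_Ico (fun y hy => ?_) measure_Ico_lt_top.ne
    rcases hy with ⟨h1, h2⟩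
    have hy0 : y < 0 := lt_of_lt_of_le h2 (by linarith)
    rw [abs_of_neg hy0]; linarith
  have hCr : IntegrableOn f (Ico ε₀ (b - x)) := by
    refine hbound _ measurableSet_Ico (fun y hy => ?_) measure_Ico_lt_top.ne
    rcases hy with ⟨h1, h2⟩
    rw [abs_of_nonneg (by linarith : (0:ℝ) ≤ y)]; linarith
  have hC : IntegrableOn f (Ico (-(b - x)) (b - x)) := by
    rw [← Ico_union_Ico_eq_Ico (by linarith : -(b-x) ≤ ε₀) (by linarith : ε₀ ≤ b - x),
      ← Ico_union_Ico_eq_Ico (by linarith : -(b-x) ≤ -ε₀) (by linarith : -ε₀ ≤ ε₀)]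
    exact (hCl.union hCmid).union hCr
  -- piece D : [b-x, ∞)
  have hD : IntegrableOn f (Ici (b - x)) := by
    have hgD : IntegrableOn (fun t : ℝ => -(p x) * t ^ (-(1 + α))) (Ici (b - x)) :=
      hIciIoi ((integrableOn_Ioi_rpow_of_lt hlt hδ).const_mul (-(p x)))
    refine hgD.congr_fun (fun y hy => ?_) measurableSet_Ici
    have hy' : b - x ≤ y := hy
    have hy0 : 0 < y := lt_of_lt_of_le hδ hy'
    have hpxy : p (x + y) = 0 := hpb _ (by linarith)
    have habs : |y| = y := abs_of_pos hy0
    have hif : ¬ |y| < b - x := by rw [habs]; push_neg; linarith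
    simp only [hfdef, hpxy, if_neg hif, sub_zero, zero_sub]
    rw [habs, Real.rpow_neg hy0.le, div_eq_mul_inv]
    try ring
  -- decomposition of ℝ
  have huniv : (univ : Set ℝ) = Iio (-(x - a)) ∪ (Ico (-(x - a)) (-(b - x)) ∪
      (Ico (-(b - x)) (b - x) ∪ Ici (b - x))) := by
    ext y
    simp only [mem_univ, mem_union, mem_Iio, mem_Ico, mem_Ici, true_iff]
    rcases lt_or_ge y (-(x - a)) with h | h
    · exact Or.inl h
    rcases lt_or_ge y (-(b - x)) with h2 | h2
    · exact Or.inr (Or.inl ⟨h, h2⟩)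
    rcases lt_or_ge y (b - x) with h3 | h3
    · exact Or.inr (Or.inr (Or.inl ⟨h2, h3⟩))
    · exact Or.inr (Or.inr (Or.inr h3))
  have htotal : Integrable f := by
    rw [← integrableOn_univ, huniv]
    exact hA.union (hB.union (hC.union hD))
  constructor
  · exact htotal.integrableOn
  -- now the integral identity
  have h0 : volume.restrict ({(0:ℝ)}ᶜ) = volume := by
    rw [Measure.restrict_congr_set (ae_eq_univ.mpr (by simp)), Measure.restrict_univ]
  -- rewrite interval bounds
  rw [show a - x = -(x - a) by ring, show x - b = -(b - x) by ring]
  have hd1 : Disjoint (Iio (-(x - a))) (Ico (-(x - a)) (-(b - x)) ∪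
      (Ico (-(b - x)) (b - x) ∪ Ici (b - x))) := by
    refine (Iio_disjoint_Ici le_rfl).mono_right ?_
    refine union_subset (Ico_subset_Ici_self.trans (Ici_subset_Ici.mpr le_rfl)) ?_
    refine union_subset (Ico_subset_Ici_self.trans (Ici_subset_Ici.mpr (by linarith))) ?_
    exact Ici_subset_Ici.mpr (by linarith)
  have hd2 : Disjoint (Ico (-(x - a)) (-(b - x))) (Ico (-(b - x)) (b - x) ∪ Ici (b - x)) := by
    refine (Iio_disjoint_Ici le_rfl).mono (Ico_subset_Iio_self) ?_
    refine union_subset (Ico_subset_Ici_self.trans (Ici_subset_Ici.mpr le_rfl)) ?_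
    exact Ici_subset_Ici.mpr (by linarith)
  have hd3 : Disjoint (Ico (-(b - x)) (b - x)) (Ici (b - x)) :=
    (Iio_disjoint_Ici le_rfl).mono Ico_subset_Iio_self le_rfl
  have hsplit : (∫ y, f y) =
      (∫ y in Iio (-(x - a)), f y) + ((∫ y in Ico (-(x - a)) (-(b - x)), f y) +
        ((∫ y in Ico (-(b - x)) (b - x), f y) + (∫ y in Ici (b - x), f y))) := by
    rw [← setIntegral_univ, huniv]
    rw [setIntegral_union hd1 (measurableSet_Ico.union (measurableSet_Ico.union
      measurableSet_Ici)) hA (hB.union (hC.union hD))]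
    rw [setIntegral_union hd2 (measurableSet_Ico.union measurableSet_Ici) hB (hC.union hD)]
    rw [setIntegral_union hd3 measurableSet_Ici hC hD]
  -- compute piece A
  have hIA : (∫ y in Iio (-(x - a)), f y) = (1 - p x) * ((x - a) ^ (-α) / α) := by
    rw [← integral_Iic_eq_integral_Iio]
    have hcongr : ∀ y ∈ Iic (-(x - a)), f y =
        (fun t : ℝ => (1 - p x) * t ^ (-(1 + α))) (-y) := by
      intro y hy
      have hy' : y ≤ -(x - a) := hy
      have hy0 : y < 0 := lt_of_le_of_lt hy' (by linarith)
      have hpxy : p (x + y) = 1 := hpa _ (by linarith)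
      have habs : |y| = -y := abs_of_neg hy0
      have hif : ¬ |y| < b - x := by rw [habs]; push_neg; linarith
      simp only [hfdef, hpxy, if_neg hif, sub_zero]
      rw [habs, Real.rpow_neg (by linarith : (0:ℝ) ≤ -y), div_eq_mul_inv, mul_comm]
    rw [setIntegral_congr_fun measurableSet_Iic hcongr,
      integral_comp_neg_Iic (-(x - a)) (fun t : ℝ => (1 - p x) * t ^ (-(1 + α)))]
    simp only [neg_neg, MeasureTheory.integral_const_mul]
    rw [integral_Ioi_rpow_of_lt hlt hr]
    rw [show -(1 + α) + 1 = -α by ring]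
    field_simp
  -- compute piece D
  have hID : (∫ y in Ici (b - x), f y) = -(p x) * ((b - x) ^ (-α) / α) := by
    have hcongr : ∀ y ∈ Ici (b - x), f y =
        (fun t : ℝ => -(p x) * t ^ (-(1 + α))) y := by
      intro y hy
      have hy' : b - x ≤ y := hy
      have hy0 : 0 < y := lt_of_lt_of_le hδ hy'
      have hpxy : p (x + y) = 0 := hpb _ (by linarith)
      have habs : |y| = y := abs_of_pos hy0
      have hif : ¬ |y| < b - x := by rw [habs]; push_neg; linarith
      simp only [hfdef, hpxy, if_neg hif, sub_zero, zero_sub]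
      rw [habs, Real.rpow_neg hy0.le, div_eq_mul_inv]
      try ring
    rw [setIntegral_congr_fun measurableSet_Ici hcongr, integral_Ici_eq_integral_Ioi]
    simp only [MeasureTheory.integral_const_mul]
    rw [integral_Ioi_rpow_of_lt hlt hδ]
    rw [show -(1 + α) + 1 = -α by ring]
    field_simp
  -- compute piece B
  have hIB : (∫ y in Ico (-(x - a)) (-(b - x)), f y) =
      ∫ y in (-(x - a))..(-(b - x)), (p (x + y) - p x) / |y| ^ (1 + α) := by
    rw [intervalIntegral.integral_of_le (by linarith : -(x - a) ≤ -(b - x))]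
    rw [integral_Ico_eq_integral_Ioo, integral_Ioc_eq_integral_Ioo]
    refine setIntegral_congr_fun measurableSet_Ioo (fun y hy => ?_)
    rcases hy with ⟨h1, h2⟩
    have hy0 : y < 0 := lt_of_le_of_lt h2.le (by linarith)
    have hif : ¬ |y| < b - x := by rw [abs_of_neg hy0]; push_neg; linarith
    simp only [hfdef, if_neg hif, sub_zero]
  -- compute piece C
  have hIC : (∫ y in Ico (-(b - x)) (b - x), f y) =
      ∫ y in (-(b - x))..(b - x), (p (x + y) - p x - y * deriv p x) / |y| ^ (1 + α) := by
    rw [intervalIntegral.integral_of_le (by linarith : -(b - x) ≤ b - x)]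
    rw [integral_Ico_eq_integral_Ioo, integral_Ioc_eq_integral_Ioo]
    refine setIntegral_congr_fun measurableSet_Ioo (fun y hy => ?_)
    have hif : |y| < b - x := abs_lt.mpr ⟨hy.1, hy.2⟩
    simp only [hfdef, if_pos hif]
  -- assemble
  have hgoal : (∫ y in {(0:ℝ)}ᶜ, f y) = ∫ y, f y := by
    rw [h0]
  rw [hgoal, hsplit, hIA, hIB, hIC, hID]
  have hrpow : (x - a) ^ (-α) = ((x - a) ^ α)⁻¹ := Real.rpow_neg hr.le α
  have hrpos : (0:ℝ) < (x - a) ^ α := Real.rpow_pos_of_pos hr α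
  rw [hrpow]
  have hinv : 1 / (α * (x - a) ^ α) = ((x - a) ^ α)⁻¹ / α := by
    rw [mul_comm, ← div_div, one_div]
  rw [hinv]
  ring
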